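/- arXiv:2507.04521 — 2 statements merged into one kernel-verified Lean document; each statement's English description precedes it below -/
import Mathlib

section
/- Let n ≥ 1 and let b_1,…,b_n ≥ 2 and c_1,…,c_n ≥ 1 be integers. Then B_n ∩ C_n ≠ ∅ if and only if 1/(t_{n−1}(t_n + t_{n−1})) < 1/(q_n(q_n − q_{n−1})). -/
noncomputable section

namespace ShulgaPaper

open Filter Topology

/-- The value of the finite continued fraction `[0; a₁, …, aₙ]`
(the empty continued fraction has value `0`). -/
def cf : List ℕ → ℝ
  | [] => 0
  | a :: l => 1 / ((a : ℝ) + cf l)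

/-- Iterates of the Gauss map, starting from the fractional part of `x`. -/
def gaussIter (x : ℝ) : ℕ → ℝ
  | 0 => Int.fract x
  | n + 1 => Int.fract (1 / gaussIter x n)

/-- The `n`-th partial quotient `aₙ(x)` of the continued fraction expansion of `x`
(for `n ≥ 1`; a junk value is returned if it is undefined). -/
def pq (x : ℝ) (n : ℕ) : ℕ := ⌊1 / gaussIter x (n - 1)⌋₊

/-- The `n`-th partial quotient `aₙ(x)` of `x` is defined (`n ≥ 1`), i.e. `n` does not
exceed the length of the continued fraction expansion of `x`. -/
def pqDefined (x : ℝ) (n : ℕ) : Prop := gaussIter x (n - 1) ≠ 0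

/-- The set `G` of real numbers that are rational or whose partial quotients diverge. -/
def G : Set ℝ :=
  {x | (∃ q : ℚ, x = (q : ℝ)) ∨ Tendsto (fun n => pq x n) atTop atTop}

/-- The list of pairs `(b_k, c_k)`, `k = 1, …, n`, produced by (a totalized version of)
Shulga's algorithm applied to `α`. -/
def shulgaList (α : ℝ) : ℕ → List (ℕ × ℕ)
  | 0 => []
  | n + 1 =>
      let L := shulgaList α n
      let b := pq (α - cf (L.map Prod.snd)) (n + 1) + 1
      let c := pq (α - cf (L.map Prod.fst ++ [b])) (n + 1)
      L ++ [(b, c)]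

/-- The list `[b₁, …, bₙ]` of Shulga's algorithm applied to `α`. -/
def bList (α : ℝ) (n : ℕ) : List ℕ := (shulgaList α n).map Prod.fst

/-- The list `[c₁, …, cₙ]` of Shulga's algorithm applied to `α`. -/
def cList (α : ℝ) (n : ℕ) : List ℕ := (shulgaList α n).map Prod.snd

/-- `bₙ` of Shulga's algorithm applied to `α` (for `n ≥ 1`). -/
def shulgaB (α : ℝ) (n : ℕ) : ℕ := ((shulgaList α n).getLast?.getD (0, 0)).1

/-- `cₙ` of Shulga's algorithm applied to `α` (for `n ≥ 1`). -/
def shulgaC (α : ℝ) (n : ℕ) : ℕ := ((shulgaList α n).getLast?.getD (0, 0)).2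

/-- The first `n` steps of Shulga's algorithm applied to `α` are defined: for each step
`k + 1 ≤ n`, the partial quotients `a_{k+1}(α - [0;c₁,…,c_k])` and
`a_{k+1}(α - [0;b₁,…,b_{k+1}])` defining `b_{k+1}` and `c_{k+1}` exist
(in particular the algorithm has not stopped before step `n`). -/
def shulgaDefined (α : ℝ) (n : ℕ) : Prop :=
  ∀ k < n, pqDefined (α - cf (cList α k)) (k + 1) ∧
    pqDefined (α - cf (bList α (k + 1))) (k + 1)

/-- The half-open interval whose included endpoint is `x` and excluded endpoint is `y`,
the smaller one being the left endpoint. -/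
def hIco (x y : ℝ) : Set ℝ := if x ≤ y then Set.Ico x y else Set.Ioc y x

/-- The list `[a 1, …, a n]`. -/
def listOf (a : ℕ → ℕ) (n : ℕ) : List ℕ := (List.range n).map fun i => a (i + 1)

/-- The interval `B_k` determined by the digits `b`, `c` (`k ≥ 1`). -/
def Bset (b c : ℕ → ℕ) (k : ℕ) : Set ℝ :=
  hIco (cf (listOf b (k - 1) ++ [b k - 1]) + cf (listOf c (k - 1)))
    (cf (listOf b k) + cf (listOf c (k - 1)))

/-- The interval `C_k` determined by the digits `b`, `c` (`k ≥ 1`). -/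
def Cset (b c : ℕ → ℕ) (k : ℕ) : Set ℝ :=
  hIco (cf (listOf c k) + cf (listOf b k))
    (cf (listOf c (k - 1) ++ [c k + 1]) + cf (listOf b k))

/-- `A₀ = [0,1]` and `Aₙ = ⋂_{k=1}^{n} (B_k ∩ C_k)` for `n ≥ 1`. -/
def Aset (b c : ℕ → ℕ) : ℕ → Set ℝ
  | 0 => Set.Icc 0 1
  | n + 1 => ⋂ k ∈ Finset.Icc 1 (n + 1), (Bset b c k ∩ Cset b c k)

/-- The denominators of the convergents of `[0; a 1, a 2, …]`:
`q₀ = 1`, `q₁ = a 1`, `q_k = a k * q_{k-1} + q_{k-2}`. -/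
def qden (a : ℕ → ℕ) : ℕ → ℕ
  | 0 => 1
  | 1 => a 1
  | n + 2 => a (n + 2) * qden a (n + 1) + qden a n


/-! Auxiliary continuant machinery -/

def DD : List ℕ → ℕ
  | [] => 1
  | [a] => a
  | a :: b :: l => a * DD (b :: l) + DD l

def NN : List ℕ → ℕ
  | [] => 0
  | _ :: l => DD l

def EE : List ℕ → ℕ
  | [] => 0
  | [_] => 1
  | a :: b :: l => a * EE (b :: l) + EE l

def MM : List ℕ → ℕ
  | [] => 1
  | _ :: l => EE l

lemma DD_cons (a : ℕ) (l : List ℕ) : DD (a :: l) = a * DD l + NN l := by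
  cases l <;> simp [DD, NN]

lemma EE_cons (a : ℕ) (l : List ℕ) : EE (a :: l) = a * EE l + MM l := by
  cases l <;> simp [EE, MM]

lemma NN_cons (a : ℕ) (l : List ℕ) : NN (a :: l) = DD l := rfl
lemma MM_cons (a : ℕ) (l : List ℕ) : MM (a :: l) = EE l := rfl

lemma append_single (m : ℕ) (l : List ℕ) :
    DD (l ++ [m]) = m * DD l + EE l ∧ NN (l ++ [m]) = m * NN l + MM l ∧
    EE (l ++ [m]) = DD l ∧ MM (l ++ [m]) = NN l := by
  induction l with
  | nil => simp [DD, NN, EE, MM]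
  | cons a l ih =>
    obtain ⟨ih1, ih2, ih3, ih4⟩ := ih
    refine ⟨?_, ?_, ?_, ?_⟩
    · rw [List.cons_append, DD_cons, ih1, ih2, DD_cons, EE_cons]
      ring
    · rw [List.cons_append, NN_cons, ih1, NN_cons, MM_cons]
    · rw [List.cons_append, EE_cons, ih3, ih4, DD_cons]
    · rw [List.cons_append, MM_cons, ih3, NN_cons]

lemma det_eq (l : List ℕ) : (DD l : ℤ) * MM l - NN l * EE l = (-1) ^ l.length := by
  induction l with
  | nil => simp [DD, NN, EE, MM]
  | cons a l ih =>
    rw [DD_cons, EE_cons, NN_cons, MM_cons, List.length_cons, pow_succ]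
    push_cast
    linear_combination (-1 : ℤ) * ih

lemma DD_pos (l : List ℕ) (h : ∀ x ∈ l, 1 ≤ x) : 1 ≤ DD l := by
  induction l with
  | nil => simp [DD]
  | cons a l ih =>
    rw [DD_cons]
    have h1 := ih fun x hx => h x (List.mem_cons_of_mem _ hx)
    have ha := h a List.mem_cons_self
    calc 1 = 1 * 1 := rfl
    _ ≤ a * DD l := Nat.mul_le_mul ha h1
    _ ≤ _ := Nat.le_add_right _ _

lemma cf_eq (l : List ℕ) (h : ∀ x ∈ l, 1 ≤ x) : cf l = (NN l : ℝ) / DD l := by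
  induction l with
  | nil => simp [cf, NN, DD]
  | cons a l ih =>
    have h' : ∀ x ∈ l, 1 ≤ x := fun x hx => h x (List.mem_cons_of_mem _ hx)
    have hD : (1 : ℝ) ≤ (DD l : ℝ) := by exact_mod_cast DD_pos l h'
    have hN : (0 : ℝ) ≤ (NN l : ℝ) := by positivity
    have ha : (1 : ℝ) ≤ (a : ℝ) := by exact_mod_cast h a List.mem_cons_self
    rw [cf, ih h', DD_cons, NN_cons]
    have hden : (a : ℝ) + (NN l : ℝ) / (DD l : ℝ) ≠ 0 := by
      have := div_nonneg hN (by linarith : (0:ℝ) ≤ (DD l : ℝ))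
      linarith
    have hden2 : ((a * DD l + NN l : ℕ) : ℝ) ≠ 0 := by
      push_cast; nlinarith
    rw [div_eq_div_iff hden (by exact_mod_cast hden2)]
    push_cast
    field_simp

lemma DE_listOf (a : ℕ → ℕ) (n : ℕ) :
    DD (listOf a n) = qden a n ∧
      EE (listOf a n) = (if n = 0 then 0 else qden a (n - 1)) := by
  induction n with
  | zero => simp [listOf, DD, EE, qden]
  | succ n ih =>
    obtain ⟨ih1, ih2⟩ := ih
    have hl : listOf a (n + 1) = listOf a n ++ [a (n + 1)] := by
      simp [listOf, List.range_succ]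
    constructor
    · rw [hl, (append_single _ _).1, ih1, ih2]
      cases n with
      | zero => simp [qden]
      | succ m => simp [qden]
    · rw [hl, (append_single _ _).2.2.1, ih1]
      simp

lemma cf_append (l : List ℕ) (h : ∀ x ∈ l, 1 ≤ x) (m : ℕ) (hm : 1 ≤ m) :
    cf (l ++ [m]) = ((m : ℝ) * NN l + MM l) / ((m : ℝ) * DD l + EE l) := by
  have h' : ∀ x ∈ l ++ [m], 1 ≤ x := by
    intro x hx
    rcases List.mem_append.1 hx with hx | hx
    · exact h x hx
    · simp at hx; omega
  rw [cf_eq _ h', (append_single m l).1, (append_single m l).2.1]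
  push_cast
  ring_nf

lemma interval_lemma (σ xB yB xC yC LB LC P : ℝ)
    (hσ : σ = 1 ∨ σ = -1) (hLB : 0 < LB) (hLC : 0 < LC) (hP : 0 < P)
    (h1 : yB - xB = σ * LB) (h2 : yC - xC = σ * LC) (h3 : yB - xC = σ * P) :
    (hIco xB yB ∩ hIco xC yC).Nonempty ↔ P - LC < LB := by
  rcases hσ with rfl | rfl
  · rw [hIco, hIco, if_pos (by linarith), if_pos (by linarith), Set.Ico_inter_Ico,
      Set.nonempty_Ico]
    simp only [lt_inf_iff, sup_lt_iff]
    constructor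
    · rintro ⟨⟨h4, h5⟩, h6, h7⟩; linarith
    · intro h; exact ⟨⟨by linarith, by linarith⟩, by linarith, by linarith⟩
  · rw [hIco, hIco, if_neg (not_le.mpr (by linarith)), if_neg (not_le.mpr (by linarith)),
      Set.Ioc_inter_Ioc, Set.nonempty_Ioc]
    simp only [lt_inf_iff, sup_lt_iff]
    constructor
    · rintro ⟨⟨h4, h5⟩, h6, h7⟩; linarith
    · intro h; exact ⟨⟨by linarith, by linarith⟩, by linarith, by linarith⟩

/-- `Bₙ ∩ Cₙ ≠ ∅ ↔ 1/(t_{n−1}(tₙ + t_{n−1})) < 1/(qₙ(qₙ − q_{n−1}))`. -/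
theorem stmt11 (n : ℕ) (hn : 1 ≤ n) (b c : ℕ → ℕ)
    (hb : ∀ k : ℕ, 1 ≤ k → k ≤ n → 2 ≤ b k) (hc : ∀ k : ℕ, 1 ≤ k → k ≤ n → 1 ≤ c k) :
    (Bset b c n ∩ Cset b c n).Nonempty ↔
      (1 : ℝ) / ((qden c (n - 1) : ℝ) * ((qden c n : ℝ) + (qden c (n - 1) : ℝ))) <
        (1 : ℝ) / ((qden b n : ℝ) * ((qden b n : ℝ) - (qden b (n - 1) : ℝ))) := by
  obtain ⟨k, rfl⟩ : ∃ k, n = k + 1 := ⟨n - 1, by omega⟩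
  have hbn : 2 ≤ b (k + 1) := hb _ (by omega) le_rfl
  have hcn : 1 ≤ c (k + 1) := hc _ (by omega) le_rfl
  have hmemb : ∀ x ∈ listOf b k, 1 ≤ x := by
    intro x hx
    simp only [listOf, List.mem_map, List.mem_range] at hx
    obtain ⟨i, hi, rfl⟩ := hx
    have := hb (i + 1) (by omega) (by omega); omega
  have hmemc : ∀ x ∈ listOf c k, 1 ≤ x := by
    intro x hx
    simp only [listOf, List.mem_map, List.mem_range] at hx
    obtain ⟨i, hi, rfl⟩ := hx
    exact hc (i + 1) (by omega) (by omega)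
  have hql : listOf b (k + 1) = listOf b k ++ [b (k + 1)] := by
    simp [listOf, List.range_succ]
  have hqlc : listOf c (k + 1) = listOf c k ++ [c (k + 1)] := by
    simp [listOf, List.range_succ]
  -- positivity of basic quantities
  have hD1 : (1 : ℝ) ≤ (DD (listOf b k) : ℝ) := by exact_mod_cast DD_pos _ hmemb
  have hD1' : (1 : ℝ) ≤ (DD (listOf c k) : ℝ) := by exact_mod_cast DD_pos _ hmemc
  have hE0 : (0 : ℝ) ≤ (EE (listOf b k) : ℝ) := by positivity
  have hE0' : (0 : ℝ) ≤ (EE (listOf c k) : ℝ) := by positivity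
  have hN0 : (0 : ℝ) ≤ (NN (listOf b k) : ℝ) := by positivity
  have hN0' : (0 : ℝ) ≤ (NN (listOf c k) : ℝ) := by positivity
  have hM0 : (0 : ℝ) ≤ (MM (listOf b k) : ℝ) := by positivity
  have hM0' : (0 : ℝ) ≤ (MM (listOf c k) : ℝ) := by positivity
  have hbb : (2 : ℝ) ≤ (b (k + 1) : ℝ) := by exact_mod_cast hbn
  have hcc : (1 : ℝ) ≤ (c (k + 1) : ℝ) := by exact_mod_cast hcn
  -- determinants
  have hlenb : (listOf b k).length = k := by simp [listOf]
  have hlenc : (listOf c k).length = k := by simp [listOf]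
  have hdetb : (DD (listOf b k) : ℝ) * MM (listOf b k) - NN (listOf b k) * EE (listOf b k)
      = (-1) ^ k := by
    have := det_eq (listOf b k); rw [hlenb] at this; exact_mod_cast this
  have hdetc : (DD (listOf c k) : ℝ) * MM (listOf c k) - NN (listOf c k) * EE (listOf c k)
      = (-1) ^ k := by
    have := det_eq (listOf c k); rw [hlenc] at this; exact_mod_cast this
  -- qden casts
  have hq1 : (qden b (k + 1) : ℝ) =
      (b (k + 1) : ℝ) * DD (listOf b k) + EE (listOf b k) := by
    rw [← (DE_listOf b (k + 1)).1, hql, (append_single _ _).1]; push_cast; ring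
  have hq2 : (qden b k : ℝ) = (DD (listOf b k) : ℝ) := by
    rw [← (DE_listOf b k).1]
  have ht1 : (qden c (k + 1) : ℝ) =
      (c (k + 1) : ℝ) * DD (listOf c k) + EE (listOf c k) := by
    rw [← (DE_listOf c (k + 1)).1, hqlc, (append_single _ _).1]; push_cast; ring
  have ht2 : (qden c k : ℝ) = (DD (listOf c k) : ℝ) := by
    rw [← (DE_listOf c k).1]
  -- cf values
  have hcfb : cf (listOf b k ++ [b (k + 1)]) =
      ((b (k + 1) : ℝ) * NN (listOf b k) + MM (listOf b k)) /
        ((b (k + 1) : ℝ) * DD (listOf b k) + EE (listOf b k)) :=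
    cf_append _ hmemb _ (by omega)
  have hcfb1 : cf (listOf b k ++ [b (k + 1) - 1]) =
      (((b (k + 1) : ℝ) - 1) * NN (listOf b k) + MM (listOf b k)) /
        (((b (k + 1) : ℝ) - 1) * DD (listOf b k) + EE (listOf b k)) := by
    rw [cf_append _ hmemb _ (by omega), Nat.cast_sub (by omega : 1 ≤ b (k + 1))]
    push_cast; ring_nf
  have hcfc : cf (listOf c k ++ [c (k + 1)]) =
      ((c (k + 1) : ℝ) * NN (listOf c k) + MM (listOf c k)) /
        ((c (k + 1) : ℝ) * DD (listOf c k) + EE (listOf c k)) :=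
    cf_append _ hmemc _ (by omega)
  have hcfc1 : cf (listOf c k ++ [c (k + 1) + 1]) =
      (((c (k + 1) : ℝ) + 1) * NN (listOf c k) + MM (listOf c k)) /
        (((c (k + 1) : ℝ) + 1) * DD (listOf c k) + EE (listOf c k)) := by
    rw [cf_append _ hmemc _ (by omega)]
    push_cast; ring_nf
  have hcflc : cf (listOf c k) = (NN (listOf c k) : ℝ) / DD (listOf c k) :=
    cf_eq _ hmemc
  -- denominator positivity
  have hb1D : (1 : ℝ) * 1 ≤ ((b (k + 1) : ℝ) - 1) * DD (listOf b k) :=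
    mul_le_mul (by linarith) hD1 zero_le_one (by linarith)
  have hbD : (1 : ℝ) * 1 ≤ (b (k + 1) : ℝ) * DD (listOf b k) :=
    mul_le_mul (by linarith) hD1 zero_le_one (by linarith)
  have hcD : (1 : ℝ) * 1 ≤ (c (k + 1) : ℝ) * DD (listOf c k) :=
    mul_le_mul (by linarith) hD1' zero_le_one (by linarith)
  have hring : ((b (k + 1) : ℝ) - 1) * DD (listOf b k) =
      (b (k + 1) : ℝ) * DD (listOf b k) - DD (listOf b k) := by ring
  have hqn : (0 : ℝ) < (b (k + 1) : ℝ) * DD (listOf b k) + EE (listOf b k) := by linarith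
  have hqn1 : (0 : ℝ) < ((b (k + 1) : ℝ) - 1) * DD (listOf b k) + EE (listOf b k) := by
    linarith
  have hqdiff : (0 : ℝ) <
      ((b (k + 1) : ℝ) * DD (listOf b k) + EE (listOf b k)) - DD (listOf b k) := by linarith
  have htn : (0 : ℝ) < (c (k + 1) : ℝ) * DD (listOf c k) + EE (listOf c k) := by linarith
  have htn1 : (0 : ℝ) < ((c (k + 1) : ℝ) + 1) * DD (listOf c k) + EE (listOf c k) := by
    linarith
  have hD0' : (0 : ℝ) < (DD (listOf c k) : ℝ) := by linarith
  have hD0 : (0 : ℝ) < (DD (listOf b k) : ℝ) := by linarith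
  -- sign
  have hσor : ((-1 : ℝ)) ^ (k + 1) = 1 ∨ ((-1 : ℝ)) ^ (k + 1) = -1 := by
    rcases Nat.even_or_odd (k + 1) with h | h
    · exact Or.inl h.neg_one_pow
    · exact Or.inr h.neg_one_pow
  -- the three difference identities
  have h1 : (cf (listOf b k ++ [b (k + 1)]) + cf (listOf c k)) -
      (cf (listOf b k ++ [b (k + 1) - 1]) + cf (listOf c k)) = (-1 : ℝ) ^ (k + 1) *
      (1 / (((b (k + 1) : ℝ) * DD (listOf b k) + EE (listOf b k)) *
        (((b (k + 1) : ℝ) * DD (listOf b k) + EE (listOf b k)) - DD (listOf b k)))) := by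
    rw [hcfb, hcfb1, pow_succ, ← hdetb]
    rw [show ((b (k + 1) : ℝ) - 1) * DD (listOf b k) + EE (listOf b k) =
      (b (k + 1) : ℝ) * DD (listOf b k) + EE (listOf b k) - DD (listOf b k) by ring]
    field_simp
    ring
  have h2 : (cf (listOf c k ++ [c (k + 1) + 1]) + cf (listOf b k ++ [b (k + 1)])) -
      (cf (listOf c k ++ [c (k + 1)]) + cf (listOf b k ++ [b (k + 1)])) = (-1 : ℝ) ^ (k + 1) *
      (1 / (((c (k + 1) : ℝ) * DD (listOf c k) + EE (listOf c k)) *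
        (((c (k + 1) : ℝ) * DD (listOf c k) + EE (listOf c k)) + DD (listOf c k)))) := by
    rw [hcfc, hcfc1, pow_succ, ← hdetc]
    field_simp
    ring
  have h3 : (cf (listOf b k ++ [b (k + 1)]) + cf (listOf c k)) -
      (cf (listOf c k ++ [c (k + 1)]) + cf (listOf b k ++ [b (k + 1)])) = (-1 : ℝ) ^ (k + 1) *
      (1 / ((DD (listOf c k) : ℝ) *
        ((c (k + 1) : ℝ) * DD (listOf c k) + EE (listOf c k)))) := by
    rw [hcfc, hcflc, pow_succ, ← hdetc]
    field_simp
    ring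
  have hLB : (0 : ℝ) < 1 / (((b (k + 1) : ℝ) * DD (listOf b k) + EE (listOf b k)) *
      (((b (k + 1) : ℝ) * DD (listOf b k) + EE (listOf b k)) - DD (listOf b k))) := by
    positivity
  have hLC : (0 : ℝ) < 1 / (((c (k + 1) : ℝ) * DD (listOf c k) + EE (listOf c k)) *
      (((c (k + 1) : ℝ) * DD (listOf c k) + EE (listOf c k)) + DD (listOf c k))) := by
    positivity
  have hP : (0 : ℝ) < 1 / ((DD (listOf c k) : ℝ) *
      ((c (k + 1) : ℝ) * DD (listOf c k) + EE (listOf c k))) := by positivity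
  -- rewrite the goal
  simp only [Bset, Cset, Nat.add_sub_cancel]
  rw [hql, hqlc, hq1, hq2, ht1, ht2,
    interval_lemma _ _ _ _ _ _ _ _ hσor hLB hLC hP h1 h2 h3]
  constructor
  · intro h
    have heq : 1 / ((DD (listOf c k) : ℝ) *
          ((c (k + 1) : ℝ) * DD (listOf c k) + EE (listOf c k))) -
        1 / (((c (k + 1) : ℝ) * DD (listOf c k) + EE (listOf c k)) *
          (((c (k + 1) : ℝ) * DD (listOf c k) + EE (listOf c k)) + DD (listOf c k))) =
        1 / ((DD (listOf c k) : ℝ) *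
          (((c (k + 1) : ℝ) * DD (listOf c k) + EE (listOf c k)) + DD (listOf c k))) := by
      field_simp
      ring
    linarith [heq]
  · intro h
    have heq : 1 / ((DD (listOf c k) : ℝ) *
          ((c (k + 1) : ℝ) * DD (listOf c k) + EE (listOf c k))) -
        1 / (((c (k + 1) : ℝ) * DD (listOf c k) + EE (listOf c k)) *
          (((c (k + 1) : ℝ) * DD (listOf c k) + EE (listOf c k)) + DD (listOf c k))) =
        1 / ((DD (listOf c k) : ℝ) *
          (((c (k + 1) : ℝ) * DD (listOf c k) + EE (listOf c k)) + DD (listOf c k))) := by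
      field_simp
      ring
    linarith [heq]


end ShulgaPaper
end
end

section
/- Let n ≥ 2 and let b_1,…,b_n ≥ 2 and c_1,…,c_n ≥ 1 be integers. Then C_n ∩ C_{n−1} ≠ ∅ if and only if 1/(q_n q_{n−1}) < c_n/((t_n + t_{n−1})(t_{n−1} + t_{n−2})). -/
noncomputable section

namespace ShulgaPaper

open Filter Topology

/-- Numerators of the convergents of `[0; a 1, a 2, …]`. -/
def pnum (a : ℕ → ℕ) : ℕ → ℕ
  | 0 => 0
  | 1 => 1
  | n + 2 => a (n + 2) * pnum a (n + 1) + pnum a n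

/-- Continued fraction with a real tail. -/
def cfR : List ℕ → ℝ → ℝ
  | [], x => x
  | a :: l, x => 1 / ((a : ℝ) + cfR l x)

lemma cfR_append (l l' : List ℕ) (x : ℝ) : cfR (l ++ l') x = cfR l (cfR l' x) := by
  induction l with
  | nil => rfl
  | cons a l ih => simp [cfR, ih]

lemma cf_eq_cfR (l : List ℕ) : cf l = cfR l 0 := by
  induction l with
  | nil => rfl
  | cons a l ih => simp [cf, cfR, ih]

lemma listOf_succ (a : ℕ → ℕ) (n : ℕ) : listOf a (n + 1) = listOf a n ++ [a (n + 1)] := by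
  simp [listOf, List.range_succ]

lemma qden_ge_one (a : ℕ → ℕ) : ∀ n, (∀ k, 1 ≤ k → k ≤ n → 1 ≤ a k) → 1 ≤ qden a n := by
  intro n
  induction n using Nat.strong_induction_on with
  | _ n ih =>
    match n with
    | 0 => intro _; simp [qden]
    | 1 => intro h; simpa [qden] using h 1 le_rfl le_rfl
    | n + 2 =>
      intro h
      have h1 := ih (n + 1) (by omega) (fun k hk hk' => h k hk (by omega))
      have h2 := h (n + 2) (by omega) le_rfl
      simp only [qden]
      nlinarith

lemma det_eq_s12 (a : ℕ → ℕ) :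
    ∀ n, (pnum a (n + 1) : ℤ) * qden a n - (pnum a n : ℤ) * qden a (n + 1) = (-1) ^ n := by
  intro n
  induction n with
  | zero => simp [pnum, qden]
  | succ n ih =>
    simp only [pnum, qden]
    push_cast
    push_cast at ih
    linear_combination -ih

lemma cfR_listOf (a : ℕ → ℕ) :
    ∀ n, (∀ k, 1 ≤ k → k ≤ n + 1 → 1 ≤ a k) → ∀ x : ℝ, 0 ≤ x →
      cfR (listOf a (n + 1)) x =
        ((pnum a (n + 1) : ℝ) + x * (pnum a n : ℝ)) /
          ((qden a (n + 1) : ℝ) + x * (qden a n : ℝ)) := by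
  intro n
  induction n with
  | zero =>
    intro h x hx
    have h1 : listOf a 1 = [a 1] := by simp [listOf, List.range_succ]
    rw [h1]
    simp [cfR, pnum, qden]
  | succ n ih =>
    intro h x hx
    rw [listOf_succ, cfR_append]
    have hA1 : 1 ≤ (a (n + 2) : ℝ) := by exact_mod_cast h (n + 2) (by omega) le_rfl
    have hAx : (0 : ℝ) < (a (n + 2) : ℝ) + x := by linarith
    have hy : cfR [a (n + 2)] x = 1 / ((a (n + 2) : ℝ) + x) := by simp [cfR]
    have hy0 : (0 : ℝ) ≤ 1 / ((a (n + 2) : ℝ) + x) := by positivity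
    rw [hy, ih (fun k hk hk' => h k hk (by omega)) _ hy0]
    have hq1 : (1 : ℝ) ≤ (qden a (n + 1) : ℝ) := by
      exact_mod_cast qden_ge_one a (n + 1) (fun k hk hk' => h k hk (by omega))
    have hq0 : (0 : ℝ) ≤ (qden a n : ℝ) := by positivity
    have hden1 : (0 : ℝ) < (qden a (n + 1) : ℝ) + (1 / ((a (n + 2) : ℝ) + x)) * (qden a n : ℝ) := by
      have : (0:ℝ) ≤ (1 / ((a (n + 2) : ℝ) + x)) * (qden a n : ℝ) := by positivity
      linarith
    have hq2 : (1 : ℝ) ≤ (qden a (n + 2) : ℝ) := by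
      exact_mod_cast qden_ge_one a (n + 2) (fun k hk hk' => h k hk (by omega))
    have hden2 : (0 : ℝ) < (qden a (n + 2) : ℝ) + x * (qden a (n + 1) : ℝ) := by
      nlinarith
    rw [div_eq_div_iff (ne_of_gt hden1) (ne_of_gt hden2)]
    have hp2 : (pnum a (n + 2) : ℝ) = (a (n + 2) : ℝ) * (pnum a (n + 1) : ℝ) + (pnum a n : ℝ) := by
      have : pnum a (n + 2) = a (n + 2) * pnum a (n + 1) + pnum a n := rfl
      rw [this]; push_cast; ring
    have hqq2 : (qden a (n + 2) : ℝ) = (a (n + 2) : ℝ) * (qden a (n + 1) : ℝ) + (qden a n : ℝ) := by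
      have : qden a (n + 2) = a (n + 2) * qden a (n + 1) + qden a n := rfl
      rw [this]; push_cast; ring
    rw [hp2, hqq2]
    field_simp
    ring

lemma cf_listOf (a : ℕ → ℕ) (n : ℕ) (h : ∀ k, 1 ≤ k → k ≤ n + 1 → 1 ≤ a k) :
    cf (listOf a (n + 1)) = (pnum a (n + 1) : ℝ) / (qden a (n + 1) : ℝ) := by
  rw [cf_eq_cfR, cfR_listOf a n h 0 le_rfl]
  simp

lemma cf_semiconv (a : ℕ → ℕ) (n : ℕ) (h : ∀ k, 1 ≤ k → k ≤ n → 1 ≤ a k) :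
    cf (listOf a n ++ [a (n + 1) + 1]) =
      ((pnum a (n + 1) : ℝ) + (pnum a n : ℝ)) / ((qden a (n + 1) : ℝ) + (qden a n : ℝ)) := by
  cases n with
  | zero =>
    have h0 : listOf a 0 = [] := by simp [listOf]
    rw [h0]
    simp [cf, pnum, qden]
  | succ n =>
    rw [cf_eq_cfR, cfR_append]
    have hy : cfR [a (n + 2) + 1] 0 = 1 / ((a (n + 2) : ℝ) + 1) := by
      push_cast [cfR]
      ring_nf
    have hA0 : (0 : ℝ) < (a (n + 2) : ℝ) + 1 := by positivity
    have hy0 : (0 : ℝ) ≤ 1 / ((a (n + 2) : ℝ) + 1) := by positivity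
    rw [hy, cfR_listOf a n (fun k hk hk' => h k hk (by omega)) _ hy0]
    have hq1 : (1 : ℝ) ≤ (qden a (n + 1) : ℝ) := by
      exact_mod_cast qden_ge_one a (n + 1) (fun k hk hk' => h k hk (by omega))
    have hq0 : (0 : ℝ) ≤ (qden a n : ℝ) := by positivity
    have hden1 : (0 : ℝ) < (qden a (n + 1) : ℝ) + (1 / ((a (n + 2) : ℝ) + 1)) * (qden a n : ℝ) := by
      have : (0:ℝ) ≤ (1 / ((a (n + 2) : ℝ) + 1)) * (qden a n : ℝ) := by positivity
      linarith
    have hqq2 : (qden a (n + 2) : ℝ) = (a (n + 2) : ℝ) * (qden a (n + 1) : ℝ) + (qden a n : ℝ) := by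
      have : qden a (n + 2) = a (n + 2) * qden a (n + 1) + qden a n := rfl
      rw [this]; push_cast; ring
    have hp2 : (pnum a (n + 2) : ℝ) = (a (n + 2) : ℝ) * (pnum a (n + 1) : ℝ) + (pnum a n : ℝ) := by
      have : pnum a (n + 2) = a (n + 2) * pnum a (n + 1) + pnum a n := rfl
      rw [this]; push_cast; ring
    have hden2 : (0 : ℝ) < (qden a (n + 2) : ℝ) + (qden a (n + 1) : ℝ) := by
      rw [hqq2]; nlinarith
    rw [div_eq_div_iff (ne_of_gt hden1) (ne_of_gt hden2), hp2, hqq2]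
    field_simp
    ring

lemma ico_inter_ioc (A B C D : ℝ) (hAB : A < B) (hCD : C < D) :
    (Set.Ico A B ∩ Set.Ioc C D).Nonempty ↔ A ≤ D ∧ C < B := by
  constructor
  · rintro ⟨x, ⟨hx1, hx2⟩, hx3, hx4⟩
    exact ⟨hx1.trans hx4, hx3.trans_le hx2.le⟩
  · rintro ⟨h1, h2⟩
    rcases lt_or_ge C A with h | h
    · exact ⟨A, ⟨le_refl A, hAB⟩, h, h1⟩
    · have hm : C < min B D := lt_min h2 hCD
      refine ⟨(C + min B D) / 2, ⟨?_, ?_⟩, ?_, ?_⟩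
      · linarith
      · have h3 : min B D ≤ B := min_le_left _ _
        linarith
      · linarith
      · have h3 : min B D ≤ D := min_le_right _ _
        linarith



lemma core_ineq (P2 Q2 P1 Q1 S2 T2 S1 T1 S0 T0 cn e : ℝ)
    (he : e = 1 ∨ e = -1)
    (hdb : P2 * Q1 - P1 * Q2 = e)
    (hdc2 : S2 * T1 - S1 * T2 = e)
    (hdc1 : S1 * T0 - S0 * T1 = -e)
    (hrecS : S2 = cn * S1 + S0)
    (hrecT : T2 = cn * T1 + T0)
    (hQ1p : 0 < Q1) (hQ2p : 0 < Q2) (hT0p : 0 < T0) (hT1p : 0 < T1) (hT2p : 0 < T2) :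
    (hIco (S2 / T2 + P2 / Q2) ((S2 + S1) / (T2 + T1) + P2 / Q2) ∩
      hIco (S1 / T1 + P1 / Q1) ((S1 + S0) / (T1 + T0) + P1 / Q1)).Nonempty ↔
      1 / (Q2 * Q1) < cn / ((T2 + T1) * (T1 + T0)) := by
  have hT21 : (0 : ℝ) < T2 + T1 := by linarith
  have hT10 : (0 : ℝ) < T1 + T0 := by linarith
  rcases he with he | he
  · rw [he] at hdb hdc2 hdc1
    have o1 : (S2 + S1) / (T2 + T1) + P2 / Q2 < S2 / T2 + P2 / Q2 := by
      have : (S2 + S1) / (T2 + T1) < S2 / T2 := by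
        rw [div_lt_div_iff₀ hT21 hT2p]; nlinarith [hdc2]
      linarith
    have o2 : S1 / T1 + P1 / Q1 < (S1 + S0) / (T1 + T0) + P1 / Q1 := by
      have : S1 / T1 < (S1 + S0) / (T1 + T0) := by
        rw [div_lt_div_iff₀ hT1p hT10]; nlinarith [hdc1]
      linarith
    unfold hIco
    rw [if_neg (not_le.mpr o1), if_pos o2.le]
    rw [Set.inter_comm, ico_inter_ioc _ _ _ _ o2 o1]
    have hAD : S1 / T1 + P1 / Q1 ≤ S2 / T2 + P2 / Q2 := by
      have e1 : S1 / T1 < S2 / T2 := by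
        rw [div_lt_div_iff₀ hT1p hT2p]; nlinarith [hdc2]
      have e2 : P1 / Q1 < P2 / Q2 := by
        rw [div_lt_div_iff₀ hQ1p hQ2p]; nlinarith [hdb]
      linarith
    have eC : (S1 + S0) / (T1 + T0) - (S2 + S1) / (T2 + T1) =
        cn / ((T2 + T1) * (T1 + T0)) := by
      rw [div_sub_div _ _ (ne_of_gt hT10) (ne_of_gt hT21), mul_comm (T1 + T0) (T2 + T1)]
      congr 1
      linear_combination -hdc2 - hdc1 - cn * hdc1 - T0 * hrecS + S0 * hrecT
    have eB : P2 / Q2 - P1 / Q1 = 1 / (Q2 * Q1) := by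
      rw [div_sub_div _ _ (ne_of_gt hQ2p) (ne_of_gt hQ1p)]
      congr 1
      linarith
    constructor
    · rintro ⟨-, h2⟩
      linarith [eC, eB]
    · intro h
      exact ⟨hAD, by linarith [eC, eB]⟩
  · rw [he] at hdb hdc2 hdc1
    have o1 : S2 / T2 + P2 / Q2 < (S2 + S1) / (T2 + T1) + P2 / Q2 := by
      have : S2 / T2 < (S2 + S1) / (T2 + T1) := by
        rw [div_lt_div_iff₀ hT2p hT21]; nlinarith [hdc2]
      linarith
    have o2 : (S1 + S0) / (T1 + T0) + P1 / Q1 < S1 / T1 + P1 / Q1 := by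
      have : (S1 + S0) / (T1 + T0) < S1 / T1 := by
        rw [div_lt_div_iff₀ hT10 hT1p]; nlinarith [hdc1]
      linarith
    unfold hIco
    rw [if_pos o1.le, if_neg (not_le.mpr o2)]
    rw [ico_inter_ioc _ _ _ _ o1 o2]
    have hAD : S2 / T2 + P2 / Q2 ≤ S1 / T1 + P1 / Q1 := by
      have e1 : S2 / T2 < S1 / T1 := by
        rw [div_lt_div_iff₀ hT2p hT1p]; nlinarith [hdc2]
      have e2 : P2 / Q2 < P1 / Q1 := by
        rw [div_lt_div_iff₀ hQ2p hQ1p]; nlinarith [hdb]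
      linarith
    have eC : (S2 + S1) / (T2 + T1) - (S1 + S0) / (T1 + T0) =
        cn / ((T2 + T1) * (T1 + T0)) := by
      rw [div_sub_div _ _ (ne_of_gt hT21) (ne_of_gt hT10)]
      congr 1
      linear_combination hdc2 + hdc1 + cn * hdc1 + T0 * hrecS - S0 * hrecT
    have eB : P1 / Q1 - P2 / Q2 = 1 / (Q2 * Q1) := by
      rw [div_sub_div _ _ (ne_of_gt hQ1p) (ne_of_gt hQ2p), mul_comm Q1 Q2]
      congr 1
      linarith
    constructor
    · rintro ⟨-, h2⟩
      linarith [eC, eB]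
    · intro h
      exact ⟨hAD, by linarith [eC, eB]⟩

/-- `Cₙ ∩ C_{n−1} ≠ ∅ ↔ 1/(qₙq_{n−1}) < cₙ/((tₙ+t_{n−1})(t_{n−1}+t_{n−2}))`. -/
theorem stmt12 (n : ℕ) (hn : 2 ≤ n) (b c : ℕ → ℕ)
    (hb : ∀ k : ℕ, 1 ≤ k → k ≤ n → 2 ≤ b k) (hc : ∀ k : ℕ, 1 ≤ k → k ≤ n → 1 ≤ c k) :
    (Cset b c n ∩ Cset b c (n - 1)).Nonempty ↔
      (1 : ℝ) / ((qden b n : ℝ) * (qden b (n - 1) : ℝ)) <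
        (c n : ℝ) / (((qden c n : ℝ) + (qden c (n - 1) : ℝ)) *
          ((qden c (n - 1) : ℝ) + (qden c (n - 2) : ℝ))) := by
  obtain ⟨m, rfl⟩ : ∃ m, n = m + 2 := ⟨n - 2, by omega⟩
  have hb' : ∀ k, 1 ≤ k → k ≤ m + 2 → 1 ≤ b k := fun k h1 h2 => le_trans one_le_two (hb k h1 h2)
  have hcb2 : cf (listOf b (m + 2)) = (pnum b (m + 2) : ℝ) / (qden b (m + 2) : ℝ) :=
    cf_listOf b (m + 1) hb'
  have hcb1 := cf_listOf b m (fun k h1 h2 => hb' k h1 (by omega))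
  have hcc2 : cf (listOf c (m + 2)) = (pnum c (m + 2) : ℝ) / (qden c (m + 2) : ℝ) :=
    cf_listOf c (m + 1) hc
  have hcc1 := cf_listOf c m (fun k h1 h2 => hc k h1 (by omega))
  have hsc2 : cf (listOf c (m + 1) ++ [c (m + 2) + 1]) =
      ((pnum c (m + 2) : ℝ) + (pnum c (m + 1) : ℝ)) /
        ((qden c (m + 2) : ℝ) + (qden c (m + 1) : ℝ)) :=
    cf_semiconv c (m + 1) (fun k h1 h2 => hc k h1 (by omega))
  have hsc1 := cf_semiconv c m (fun k h1 h2 => hc k h1 (by omega))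
  simp only [Cset, show m + 2 - 1 = m + 1 from rfl, show m + 2 - 2 = m from rfl,
    show m + 1 - 1 = m from rfl]
  rw [hcb2, hcb1, hcc2, hcc1, hsc2, hsc1]
  refine core_ineq _ _ _ _ _ _ _ _ _ _ _ ((-1 : ℝ) ^ (m + 1)) ?_ ?_ ?_ ?_ ?_ ?_ ?_ ?_ ?_ ?_ ?_
  · rcases Nat.even_or_odd m with he | ho
    · right; exact (he.add_one).neg_one_pow
    · left; exact (ho.add_one).neg_one_pow
  · exact_mod_cast det_eq_s12 b (m + 1)
  · exact_mod_cast det_eq_s12 c (m + 1)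
  · have h : ((pnum c (m + 1) : ℝ) * (qden c m : ℝ) - (pnum c m : ℝ) * (qden c (m + 1) : ℝ))
        = (-1 : ℝ) ^ m := by exact_mod_cast det_eq_s12 c m
    rw [h]; ring
  · have h : pnum c (m + 2) = c (m + 2) * pnum c (m + 1) + pnum c m := rfl
    rw [h]; push_cast; ring
  · have h : qden c (m + 2) = c (m + 2) * qden c (m + 1) + qden c m := rfl
    rw [h]; push_cast; ring
  · have h := qden_ge_one b (m + 1) (fun k h1 h2 => hb' k h1 (by omega))
    have h' : (1 : ℝ) ≤ (qden b (m + 1) : ℝ) := by exact_mod_cast h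
    linarith
  · have h := qden_ge_one b (m + 2) hb'
    have h' : (1 : ℝ) ≤ (qden b (m + 2) : ℝ) := by exact_mod_cast h
    linarith
  · have h := qden_ge_one c m (fun k h1 h2 => hc k h1 (by omega))
    have h' : (1 : ℝ) ≤ (qden c m : ℝ) := by exact_mod_cast h
    linarith
  · have h := qden_ge_one c (m + 1) (fun k h1 h2 => hc k h1 (by omega))
    have h' : (1 : ℝ) ≤ (qden c (m + 1) : ℝ) := by exact_mod_cast h
    linarith
  · have h := qden_ge_one c (m + 2) hc
    have h' : (1 : ℝ) ≤ (qden c (m + 2) : ℝ) := by exact_mod_cast h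
    linarith

end ShulgaPaper
end
end
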